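/- Let R' be a fixed lattice in K^{n-1} ⊂ K^n. The number of lattices R in K^n with R ∩ K^{n-1} = R', with projection-valuation ξ(R) = ξ and invariant ν(R) = ν equals 1/vol(R' ∩ O^{n-1}) if ν = 0, and p^{ν(n-1)}(1 − p^{-(n-1)})/vol(R' ∩ O^{n-1}) if ν > 0; in particular it does not depend on ξ. -/

import Mathlib

open MeasureTheory

noncomputable section

instance (p : ℕ) [Fact p.Prime] : MeasurableSpace ℚ_[p] := borel _

/-- The standard lattice `ℤ_p^n ⊂ ℚ_p^n`. -/
def stdLat (p n : ℕ) [Fact p.Prime] : Submodule ℤ_[p] (Fin n → ℚ_[p]) :=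
  Submodule.pi Set.univ fun _ => 1

/-- A lattice in `ℚ_p^n` is a compact open `ℤ_p`-submodule. -/
def IsLattice {p n : ℕ} [Fact p.Prime] (R : Submodule ℤ_[p] (Fin n → ℚ_[p])) : Prop :=
  IsCompact (R : Set (Fin n → ℚ_[p])) ∧ IsOpen (R : Set (Fin n → ℚ_[p]))

/-- The coordinate hyperplane `K^{n-1} = {x : x_{last} = 0}` inside `ℚ_p^{m+1}`,
viewed as a `ℤ_p`-submodule. -/
def Kpred (p m : ℕ) [Fact p.Prime] : Submodule ℤ_[p] (Fin (m + 1) → ℚ_[p]) :=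
  LinearMap.ker ((LinearMap.proj (Fin.last m) :
    (Fin (m + 1) → ℚ_[p]) →ₗ[ℤ_[p]] ℚ_[p]))

/-- `R'` is a lattice in the subspace `W`: it is contained in `W`, compact, and open
in the subspace topology of `W`. -/
def IsLatticeWithin {p n : ℕ} [Fact p.Prime] (W R' : Submodule ℤ_[p] (Fin n → ℚ_[p])) : Prop :=
  R' ≤ W ∧ IsCompact (R' : Set (Fin n → ℚ_[p])) ∧
    IsOpen (Subtype.val ⁻¹' (R' : Set (Fin n → ℚ_[p])) : Set W)

/-- The vector `p^ξ e_n + v`. -/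
def genVec (p m : ℕ) [Fact p.Prime] (ξ : ℤ) (v : Fin (m + 1) → ℚ_[p]) :
    Fin (m + 1) → ℚ_[p] :=
  Pi.single (Fin.last m) ((p : ℚ_[p]) ^ ξ) + v

/-- The subset of `ℚ_p^j = K^j` corresponding to `A ∩ K^j`, where `K^j ⊆ ℚ_p^n` is the
span of the first `j` standard basis vectors. -/
def restrictSet (p : ℕ) [Fact p.Prime] {n : ℕ} (j : ℕ) (A : Set (Fin n → ℚ_[p])) :
    Set (Fin j → ℚ_[p]) :=
  {y | (fun i : Fin n => if h : (i : ℕ) < j then y ⟨i, h⟩ else 0) ∈ A}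
instance (p : ℕ) [Fact p.Prime] : BorelSpace ℚ_[p] := ⟨rfl⟩

section aux
variable (p : ℕ) [Fact p.Prime]

lemma mem_one_iff (x : ℚ_[p]) : x ∈ (1 : Submodule ℤ_[p] ℚ_[p]) ↔ ‖x‖ ≤ 1 := by
  rw [Submodule.mem_one]
  simp only [PadicInt.algebraMap_apply]
  constructor
  · rintro ⟨y, rfl⟩
    exact y.2
  · intro h
    exact ⟨⟨x, h⟩, rfl⟩

lemma isOpen_one : IsOpen ((1 : Submodule ℤ_[p] ℚ_[p]) : Set ℚ_[p]) := by
  have : ((1 : Submodule ℤ_[p] ℚ_[p]) : Set ℚ_[p]) = Metric.closedBall 0 1 := by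
    ext x
    rw [SetLike.mem_coe, mem_one_iff, Metric.mem_closedBall, dist_zero_right]
  rw [this]
  exact IsUltrametricDist.isOpen_closedBall _ one_ne_zero

lemma isCompact_one : IsCompact ((1 : Submodule ℤ_[p] ℚ_[p]) : Set ℚ_[p]) := by
  have : ((1 : Submodule ℤ_[p] ℚ_[p]) : Set ℚ_[p]) = Set.range ((↑) : ℤ_[p] → ℚ_[p]) := by
    ext x
    constructor
    · intro h; exact ⟨⟨x, (mem_one_iff p x).mp h⟩, rfl⟩
    · rintro ⟨y, rfl⟩; exact (mem_one_iff p _).mpr y.2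
  rw [this]
  haveI : CompactSpace {x : ℚ_[p] // ‖x‖ ≤ 1} := PadicInt.compactSpace p
  exact isCompact_range continuous_subtype_val

lemma mem_stdLat_iff {n : ℕ} (x : Fin n → ℚ_[p]) :
    x ∈ stdLat p n ↔ ∀ i, ‖x i‖ ≤ 1 := by
  rw [stdLat, Submodule.mem_pi]
  exact ⟨fun h i => (mem_one_iff p _).mp (h i trivial), fun h i _ => (mem_one_iff p _).mpr (h i)⟩

lemma stdLat_coe (n : ℕ) :
    (stdLat p n : Set (Fin n → ℚ_[p])) = Set.pi Set.univ fun _ => ((1 : Submodule ℤ_[p] ℚ_[p]) : Set ℚ_[p]) := by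
  ext x; simp [stdLat, Submodule.mem_pi, Set.mem_pi]

lemma isOpen_stdLat (n : ℕ) : IsOpen (stdLat p n : Set (Fin n → ℚ_[p])) := by
  rw [stdLat_coe]
  exact isOpen_set_pi Set.finite_univ fun i _ => isOpen_one p

lemma isCompact_stdLat (n : ℕ) : IsCompact (stdLat p n : Set (Fin n → ℚ_[p])) := by
  rw [stdLat_coe]
  exact isCompact_univ_pi fun i => isCompact_one p

/-- inclusion `K^m → K^{m+1}`. -/
def padLin (m : ℕ) : (Fin m → ℚ_[p]) →ₗ[ℤ_[p]] (Fin (m + 1) → ℚ_[p]) where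
  toFun y := fun i => if h : (i : ℕ) < m then y ⟨i, h⟩ else 0
  map_add' x y := by funext i; by_cases h : (i : ℕ) < m <;> simp [h]
  map_smul' c x := by funext i; by_cases h : (i : ℕ) < m <;> simp [h]

def unpadLin (m : ℕ) : (Fin (m + 1) → ℚ_[p]) →ₗ[ℤ_[p]] (Fin m → ℚ_[p]) :=
  LinearMap.funLeft ℤ_[p] ℚ_[p] Fin.castSucc

lemma unpad_pad (m : ℕ) (y : Fin m → ℚ_[p]) : unpadLin p m (padLin p m y) = y := by
  funext j
  simp only [unpadLin, padLin, LinearMap.funLeft_apply, LinearMap.coe_mk, AddHom.coe_mk]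
  rw [dif_pos (by simpa using j.2)]
  exact congrArg y (by ext; simp)

lemma padLin_mem_Kpred (m : ℕ) (y : Fin m → ℚ_[p]) : padLin p m y ∈ Kpred p m := by
  simp only [Kpred, LinearMap.mem_ker, LinearMap.proj_apply]
  simp [padLin]

lemma pad_unpad (m : ℕ) (x : Fin (m + 1) → ℚ_[p]) (hx : x ∈ Kpred p m) :
    padLin p m (unpadLin p m x) = x := by
  funext i
  simp only [unpadLin, padLin, LinearMap.funLeft_apply, LinearMap.coe_mk, AddHom.coe_mk]
  by_cases h : (i : ℕ) < m
  · simp only [dif_pos h]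
    exact congrArg x (by ext; simp)
  · simp only [dif_neg h]
    have h2 : (i : ℕ) < m + 1 := i.2
    have : i = Fin.last m := by ext; simp only [Fin.val_last]; omega
    subst this
    simpa [Kpred, LinearMap.mem_ker, LinearMap.proj_apply] using hx.symm

lemma continuous_padLin (m : ℕ) : Continuous (padLin p m) := by
  apply continuous_pi
  intro i
  by_cases h : (i : ℕ) < m
  · simpa only [padLin, LinearMap.coe_mk, AddHom.coe_mk, dif_pos h] using
      (continuous_apply (⟨(i : ℕ), h⟩ : Fin m))
  · simpa only [padLin, LinearMap.coe_mk, AddHom.coe_mk, dif_neg h] using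
      (continuous_const : Continuous fun _ : Fin m → ℚ_[p] => (0 : ℚ_[p]))

lemma continuous_unpadLin (m : ℕ) : Continuous (unpadLin p m) := by
  apply continuous_pi
  intro j
  exact continuous_apply _

lemma padLin_mem_stdLat (m : ℕ) (y : Fin m → ℚ_[p]) :
    padLin p m y ∈ stdLat p (m + 1) ↔ y ∈ stdLat p m := by
  simp only [mem_stdLat_iff]
  constructor
  · intro h j
    have := h (Fin.castSucc j)
    simpa [padLin, dif_pos (show ((Fin.castSucc j : Fin (m+1)) : ℕ) < m by simpa using j.2)] using this
  · intro h i
    by_cases hi : (i : ℕ) < m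
    · simpa [padLin, dif_pos hi] using h ⟨i, hi⟩
    · simp [padLin, dif_neg hi]

end aux


section generic
variable {G : Type*} [AddCommGroup G] [TopologicalSpace G] [IsTopologicalAddGroup G]

lemma finite_quot (H K : AddSubgroup G) (hK : IsCompact (K : Set G))
    (hH : IsOpen (H : Set G)) : Finite (↥K ⧸ H.addSubgroupOf K) := by
  haveI : CompactSpace ↥K := isCompact_iff_compactSpace.mp hK
  apply AddSubgroup.quotient_finite_of_isOpen
  have h2 : ((H.addSubgroupOf K : AddSubgroup ↥K) : Set ↥K)
      = (Subtype.val : ↥K → G) ⁻¹' (H : Set G) := rfl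
  rw [h2]
  exact hH.preimage continuous_subtype_val

lemma relindex_ne_zero (H K : AddSubgroup G) (hK : IsCompact (K : Set G))
    (hH : IsOpen (H : Set G)) : H.relIndex K ≠ 0 := by
  have := finite_quot H K hK hH
  rw [AddSubgroup.relIndex, AddSubgroup.index]
  exact Nat.card_ne_zero.mpr ⟨inferInstance, this⟩

variable [MeasurableSpace G] [BorelSpace G]

lemma measure_eq_relindex_mul (μ : Measure G) [μ.IsAddLeftInvariant]
    (H K : AddSubgroup G) (hHK : H ≤ K) (hK : IsCompact (K : Set G))
    (hH : IsOpen (H : Set G)) :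
    μ (K : Set G) = (H.relIndex K) * μ (H : Set G) := by
  haveI fin : Finite (↥K ⧸ H.addSubgroupOf K) := finite_quot H K hK hH
  haveI : Fintype (↥K ⧸ H.addSubgroupOf K) := Fintype.ofFinite _
  set Q := ↥K ⧸ H.addSubgroupOf K with hQ
  set r : Q → G := fun q => ((Quotient.out q : ↥K) : G) with hr
  set A : Q → Set G := fun q => (fun x => -(r q) + x) ⁻¹' (H : Set G) with hA
  have hrK : ∀ q, r q ∈ K := fun q => (Quotient.out q : ↥K).2
  have hmk : ∀ (q : Q) (x : G) (hx : x ∈ K),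
      (-(r q) + x ∈ H ↔ QuotientAddGroup.mk (⟨x, hx⟩ : ↥K) = q) := by
    intro q x hx
    have hco : (((-(⟨x, hx⟩ : ↥K) + Quotient.out q : ↥K)) : G) = -x + r q := by simp [hr]
    constructor
    · intro h
      rw [← QuotientAddGroup.out_eq' q]
      apply QuotientAddGroup.eq.mpr
      rw [AddSubgroup.mem_addSubgroupOf, hco]
      have := H.neg_mem h
      rwa [neg_add_rev, neg_neg] at this
    · intro h
      have h2 := QuotientAddGroup.eq.mp (h.trans (QuotientAddGroup.out_eq' q).symm)
      rw [AddSubgroup.mem_addSubgroupOf, hco] at h2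
      have := H.neg_mem h2
      rwa [neg_add_rev, neg_neg] at this
  have key : (K : Set G) = ⋃ q : Q, A q := by
    ext x
    constructor
    · intro hx
      refine Set.mem_iUnion.mpr ⟨QuotientAddGroup.mk (⟨x, hx⟩ : ↥K), ?_⟩
      exact (hmk _ x hx).mpr rfl
    · intro hx
      obtain ⟨q, hq⟩ := Set.mem_iUnion.mp hx
      have h1 : -(r q) + x ∈ H := hq
      have := hHK h1
      have : r q + (-(r q) + x) ∈ K := K.add_mem (hrK q) this
      simpa using this
  have hdisj : Pairwise (Function.onFun Disjoint A) := by
    intro q₁ q₂ hne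
    rw [Function.onFun, Set.disjoint_left]
    intro x h1 h2
    have hxK : x ∈ K := by
      have := hHK (show -(r q₁) + x ∈ H from h1)
      have : r q₁ + (-(r q₁) + x) ∈ K := K.add_mem (hrK q₁) this
      simpa using this
    exact hne (((hmk q₁ x hxK).mp h1).symm.trans ((hmk q₂ x hxK).mp h2))
  have hmeas : ∀ q, MeasurableSet (A q) :=
    fun q => (hH.preimage (continuous_add_left _)).measurableSet
  rw [key, measure_iUnion hdisj hmeas]
  have : ∀ q : Q, μ (A q) = μ (H : Set G) := by
    intro q
    exact measure_preimage_add μ (-(r q)) (H : Set G)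
  rw [tsum_congr this, tsum_fintype, Finset.sum_const, Finset.card_univ, nsmul_eq_mul,
    AddSubgroup.relIndex, AddSubgroup.index, Nat.card_eq_fintype_card]

end generic

lemma relindex_map_addEquiv {G G' : Type*} [AddGroup G] [AddGroup G'] (e : G ≃+ G')
    (H K : AddSubgroup G) :
    (H.map e.toAddMonoidHom).relIndex (K.map e.toAddMonoidHom) = H.relIndex K := by
  have := AddSubgroup.relIndex_comap (H := H.map e.toAddMonoidHom) e.toAddMonoidHom K
  rw [AddSubgroup.comap_map_eq_self_of_injective e.injective] at this
  exact this.symm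


section bridge
variable {R M : Type*} [Ring R] [AddCommGroup M] [Module R M]

lemma toAddSubgroup_inf (A B : Submodule R M) :
    (A ⊓ B).toAddSubgroup = A.toAddSubgroup ⊓ B.toAddSubgroup := rfl

lemma toAddSubgroup_sup (A B : Submodule R M) :
    (A ⊔ B).toAddSubgroup = A.toAddSubgroup ⊔ B.toAddSubgroup := by
  ext x
  simp only [Submodule.mem_toAddSubgroup, Submodule.mem_sup, AddSubgroup.mem_sup]

lemma card_map_mkQ (A P : Submodule R M) :
    Nat.card ↥(Submodule.map A.mkQ P) = A.toAddSubgroup.relIndex P.toAddSubgroup := by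
  have hker : LinearMap.ker (A.mkQ.comp P.subtype) = A.comap P.subtype := by
    rw [LinearMap.ker_comp, Submodule.ker_mkQ]
  have hran : LinearMap.range (A.mkQ.comp P.subtype) = Submodule.map A.mkQ P := by
    rw [LinearMap.range_comp, Submodule.range_subtype]
  calc Nat.card ↥(Submodule.map A.mkQ P)
      = Nat.card ↥(LinearMap.range (A.mkQ.comp P.subtype)) := by rw [hran]
    _ = Nat.card (↥P ⧸ LinearMap.ker (A.mkQ.comp P.subtype)) :=
        (Nat.card_congr (LinearMap.quotKerEquivRange (A.mkQ.comp P.subtype)).toEquiv).symm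
    _ = Nat.card (↥P ⧸ A.comap P.subtype) := by rw [hker]
    _ = A.toAddSubgroup.relIndex P.toAddSubgroup := rfl

end bridge

section padicindex
variable (p : ℕ) [Fact p.Prime] (m : ℕ)

lemma ppow_ne_zero (k : ℕ) : ((p : ℚ_[p]) ^ k) ≠ 0 :=
  pow_ne_zero _ (Nat.cast_ne_zero.mpr (Fact.out : p.Prime).ne_zero)

lemma zsmul_coe (k : ℕ) {n : ℕ} (x : Fin n → ℚ_[p]) :
    ((p : ℤ_[p]) ^ k) • x = ((p : ℚ_[p]) ^ k) • x := by
  funext i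
  simp only [Pi.smul_apply, Algebra.smul_def, PadicInt.algebraMap_apply, smul_eq_mul,
    PadicInt.coe_pow, PadicInt.coe_natCast, Algebra.algebraMap_self_apply]

/-- scaling by `p^k` as a linear map. -/
def pkSMul (k : ℕ) : (Fin m → ℚ_[p]) →ₗ[ℤ_[p]] (Fin m → ℚ_[p]) :=
  ((p : ℤ_[p]) ^ k) • LinearMap.id

/-- scaling by `p^k` as an additive equivalence. -/
def pkEquiv (k : ℕ) : (Fin m → ℚ_[p]) ≃+ (Fin m → ℚ_[p]) :=
  (LinearEquiv.smulOfNeZero ℚ_[p] (Fin m → ℚ_[p]) ((p : ℚ_[p]) ^ k)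
    (ppow_ne_zero p k)).toAddEquiv

lemma pkEquiv_apply (k : ℕ) (x : Fin m → ℚ_[p]) :
    pkEquiv p m k x = ((p : ℚ_[p]) ^ k) • x := rfl

lemma pkSMul_apply (k : ℕ) (x : Fin m → ℚ_[p]) :
    pkSMul p m k x = ((p : ℚ_[p]) ^ k) • x := by
  rw [pkSMul, LinearMap.smul_apply, LinearMap.id_apply, zsmul_coe]

lemma map_pkEquiv (k : ℕ) (X : Submodule ℤ_[p] (Fin m → ℚ_[p])) :
    AddSubgroup.map (pkEquiv p m k).toAddMonoidHom X.toAddSubgroup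
      = (Submodule.map (pkSMul p m k) X).toAddSubgroup := by
  ext x
  simp only [AddSubgroup.mem_map, Submodule.mem_toAddSubgroup, Submodule.mem_map]
  constructor
  · rintro ⟨y, hy, rfl⟩
    exact ⟨y, hy, (pkSMul_apply p m k y).symm ▸ rfl⟩
  · rintro ⟨y, hy, rfl⟩
    exact ⟨y, hy, by rw [pkSMul_apply]; rfl⟩

lemma map_pkEquiv_comap (k : ℕ) (N : Submodule ℤ_[p] (Fin m → ℚ_[p])) :
    AddSubgroup.map (pkEquiv p m k).toAddMonoidHom
      (Submodule.comap (pkSMul p m k) N).toAddSubgroup = N.toAddSubgroup := by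
  ext x
  simp only [AddSubgroup.mem_map, Submodule.mem_toAddSubgroup, Submodule.mem_comap]
  constructor
  · rintro ⟨y, hy, rfl⟩
    rw [pkSMul_apply] at hy
    exact hy
  · intro hx
    refine ⟨((p : ℚ_[p]) ^ k)⁻¹ • x, ?_, ?_⟩
    · rw [pkSMul_apply, smul_inv_smul₀ (ppow_ne_zero p k)]
      exact hx
    · show pkEquiv p m k _ = x
      rw [pkEquiv_apply, smul_inv_smul₀ (ppow_ne_zero p k)]

end padicindex

section stdidx
variable (p : ℕ) [Fact p.Prime] (m : ℕ)

lemma toZModPow_surjective (k : ℕ) :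
    Function.Surjective (PadicInt.toZModPow (p := p) k) := by
  haveI : NeZero (p ^ k) := ⟨pow_ne_zero k (Fact.out : p.Prime).ne_zero⟩
  intro z
  exact ⟨(((z.val : ℕ) : ℤ_[p])), by rw [map_natCast]; exact ZMod.natCast_rightInverse z⟩

/-- `ℤ_p^m` as the standard lattice. -/
def stdLatEquiv : (Fin m → ℤ_[p]) ≃+ ↥((stdLat p m).toAddSubgroup) where
  toFun y := ⟨fun i => (y i : ℚ_[p]),
    Submodule.mem_toAddSubgroup _ |>.mpr ((mem_stdLat_iff p _).mpr fun i => (y i).2)⟩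
  invFun x := fun i => ⟨x.1 i, (mem_stdLat_iff p _).mp (Submodule.mem_toAddSubgroup _ |>.mp x.2) i⟩
  left_inv y := by funext i; ext; rfl
  right_inv x := by ext i; rfl
  map_add' y z := by ext i; simp

lemma relindex_pk_stdLat (k : ℕ) :
    (Submodule.map (pkSMul p m k) (stdLat p m)).toAddSubgroup.relIndex
      (stdLat p m).toAddSubgroup = p ^ (k * m) := by
  classical
  haveI : NeZero (p ^ k) := ⟨pow_ne_zero k (Fact.out : p.Prime).ne_zero⟩
  set O := (stdLat p m).toAddSubgroup with hO
  set P := (Submodule.map (pkSMul p m k) (stdLat p m)).toAddSubgroup with hP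
  let g : (Fin m → ℤ_[p]) →+ (Fin m → ZMod (p ^ k)) :=
    (PadicInt.toZModPow k).toAddMonoidHom.compLeft (Fin m)
  have hg : ∀ (y : Fin m → ℤ_[p]) (i : Fin m), g y i = PadicInt.toZModPow k (y i) := by
    intro y i; rfl
  have hgsur : Function.Surjective g := by
    intro z
    choose w hw using fun i => toZModPow_surjective p k (z i)
    exact ⟨w, funext fun i => by rw [hg]; exact hw i⟩
  have hker : AddSubgroup.map (stdLatEquiv p m).symm.toAddMonoidHom (P.addSubgroupOf O)
      = g.ker := by
    ext x
    constructor
    · rintro ⟨y, hy, rfl⟩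
      have hy1 : (y : Fin m → ℚ_[p]) ∈ Submodule.map (pkSMul p m k) (stdLat p m) :=
        AddSubgroup.mem_addSubgroupOf.mp hy
      obtain ⟨w, hw, hww⟩ := hy1
      rw [AddMonoidHom.mem_ker]
      funext i
      rw [hg]
      have hdvd : (p : ℤ_[p]) ^ k ∣ ((stdLatEquiv p m).symm.toAddMonoidHom y i) := by
        refine ⟨⟨w i, (mem_stdLat_iff p w).mp hw i⟩, ?_⟩
        apply PadicInt.ext
        have := congrFun hww i
        rw [pkSMul_apply] at this
        simp only [Pi.smul_apply, smul_eq_mul] at this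
        show ((stdLatEquiv p m).symm.toAddMonoidHom y i : ℚ_[p])
          = (((p : ℤ_[p]) ^ k * (show ℤ_[p] from ⟨w i, (mem_stdLat_iff p w).mp hw i⟩) : ℤ_[p]) : ℚ_[p])
        rw [PadicInt.coe_mul, PadicInt.coe_pow, PadicInt.coe_natCast]
        exact this.symm
      have : ((stdLatEquiv p m).symm.toAddMonoidHom y i) ∈ RingHom.ker (PadicInt.toZModPow (p := p) k) := by
        rw [PadicInt.ker_toZModPow, Ideal.mem_span_singleton]
        exact hdvd
      simpa [RingHom.mem_ker] using this
    · intro hx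
      rw [AddMonoidHom.mem_ker] at hx
      have hdvd : ∀ i, (p : ℤ_[p]) ^ k ∣ x i := by
        intro i
        rw [← Ideal.mem_span_singleton, ← PadicInt.ker_toZModPow, RingHom.mem_ker]
        have := congrFun hx i
        rwa [hg] at this
      choose c hc using hdvd
      refine ⟨stdLatEquiv p m x, ?_, by simp⟩
      rw [SetLike.mem_coe, AddSubgroup.mem_addSubgroupOf]
      refine ⟨fun i => ((c i : ℤ_[p]) : ℚ_[p]), (mem_stdLat_iff p _).mpr fun i => (c i).2, ?_⟩
      rw [pkSMul_apply]
      funext i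
      simp only [Pi.smul_apply, smul_eq_mul]
      show ((p : ℚ_[p]) ^ k) * ((c i : ℤ_[p]) : ℚ_[p]) = ((x i : ℤ_[p]) : ℚ_[p])
      rw [hc i]
      push_cast
      ring
  have e1 : (↥O ⧸ P.addSubgroupOf O) ≃+ ((Fin m → ℤ_[p]) ⧸ g.ker) :=
    QuotientAddGroup.congr (P.addSubgroupOf O) g.ker (stdLatEquiv p m).symm hker
  have e2 : ((Fin m → ℤ_[p]) ⧸ g.ker) ≃+ (Fin m → ZMod (p ^ k)) :=
    QuotientAddGroup.quotientKerEquivOfSurjective g hgsur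
  rw [AddSubgroup.relIndex, AddSubgroup.index_eq_card]
  rw [Nat.card_congr e1.toEquiv, Nat.card_congr e2.toEquiv]
  rw [Nat.card_pi]
  simp [Nat.card_zmod, pow_mul]
end stdidx

section bridge2
variable {R M : Type*} [Ring R] [AddCommGroup M] [Module R M]

lemma mkQ_mem_map_iff (A P : Submodule R M) (h : A ≤ P) (x : M) :
    A.mkQ x ∈ Submodule.map A.mkQ P ↔ x ∈ P := by
  constructor
  · rintro ⟨y, hy, hxy⟩
    have hsub : x - y ∈ A := by
      refine (Submodule.Quotient.eq A).mp ?_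
      rw [← Submodule.mkQ_apply, ← Submodule.mkQ_apply, hxy]
    have hxe : x = y + (x - y) := by abel
    rw [hxe]
    exact P.add_mem hy (h hsub)
  · intro hx
    exact ⟨x, hx, rfl⟩

end bridge2

section sandwich
variable (p : ℕ) [Fact p.Prime] (m : ℕ)

lemma map_pk_le (k : ℕ) (X : Submodule ℤ_[p] (Fin m → ℚ_[p])) :
    Submodule.map (pkSMul p m k) X ≤ X := by
  rintro x ⟨y, hy, rfl⟩
  exact X.smul_mem _ hy

lemma map_pk_coe (k : ℕ) (X : Submodule ℤ_[p] (Fin m → ℚ_[p])) :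
    (Submodule.map (pkSMul p m k) X : Set (Fin m → ℚ_[p]))
      = (fun x => ((p : ℚ_[p]) ^ k) • x) '' X := by
  ext x
  simp only [SetLike.mem_coe, Submodule.mem_map, Set.mem_image]
  exact ⟨fun ⟨y, hy, hxy⟩ => ⟨y, hy, by rw [← pkSMul_apply]; exact hxy⟩,
    fun ⟨y, hy, hxy⟩ => ⟨y, hy, by rw [pkSMul_apply]; exact hxy⟩⟩

lemma comap_pk_coe (k : ℕ) (X : Submodule ℤ_[p] (Fin m → ℚ_[p])) :
    (Submodule.comap (pkSMul p m k) X : Set (Fin m → ℚ_[p]))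
      = (fun x => ((p : ℚ_[p]) ^ k) • x) ⁻¹' X := by
  ext x
  simp only [SetLike.mem_coe, Submodule.mem_comap, Set.mem_preimage]
  rw [pkSMul_apply]

lemma map_pk_isCompact (k : ℕ) (X : Submodule ℤ_[p] (Fin m → ℚ_[p]))
    (hX : IsCompact (X : Set (Fin m → ℚ_[p]))) :
    IsCompact (Submodule.map (pkSMul p m k) X : Set (Fin m → ℚ_[p])) := by
  rw [map_pk_coe]
  exact hX.image (continuous_const_smul _)

lemma map_pk_isOpen (k : ℕ) (X : Submodule ℤ_[p] (Fin m → ℚ_[p]))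
    (hX : IsOpen (X : Set (Fin m → ℚ_[p]))) :
    IsOpen (Submodule.map (pkSMul p m k) X : Set (Fin m → ℚ_[p])) := by
  rw [map_pk_coe]
  exact (Homeomorph.smulOfNeZero _ (ppow_ne_zero p k)).isOpen_image.mpr hX

lemma comap_pk_isCompact (k : ℕ) (X : Submodule ℤ_[p] (Fin m → ℚ_[p]))
    (hX : IsCompact (X : Set (Fin m → ℚ_[p]))) :
    IsCompact (Submodule.comap (pkSMul p m k) X : Set (Fin m → ℚ_[p])) := by
  rw [comap_pk_coe]
  exact (Homeomorph.smulOfNeZero ((p : ℚ_[p]) ^ k) (ppow_ne_zero p k)).isCompact_preimage.mpr hX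

lemma comap_pk_isOpen (k : ℕ) (X : Submodule ℤ_[p] (Fin m → ℚ_[p]))
    (hX : IsOpen (X : Set (Fin m → ℚ_[p]))) :
    IsOpen (Submodule.comap (pkSMul p m k) X : Set (Fin m → ℚ_[p])) := by
  rw [comap_pk_coe]
  exact hX.preimage (continuous_const_smul _)

lemma sup_isCompact (A B : Submodule ℤ_[p] (Fin m → ℚ_[p]))
    (hA : IsCompact (A : Set (Fin m → ℚ_[p]))) (hB : IsCompact (B : Set (Fin m → ℚ_[p]))) :
    IsCompact ((A ⊔ B : Submodule ℤ_[p] (Fin m → ℚ_[p])) : Set (Fin m → ℚ_[p])) := by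
  rw [Submodule.coe_sup]
  exact hA.add hB

lemma sup_isOpen (A B : Submodule ℤ_[p] (Fin m → ℚ_[p]))
    (hB : IsOpen (B : Set (Fin m → ℚ_[p]))) :
    IsOpen ((A ⊔ B : Submodule ℤ_[p] (Fin m → ℚ_[p])) : Set (Fin m → ℚ_[p])) := by
  have : ((A ⊔ B : Submodule ℤ_[p] (Fin m → ℚ_[p])) : Set (Fin m → ℚ_[p]))
      = ⋃ a : ↥A, (fun x => (a : Fin m → ℚ_[p]) + x) '' (B : Set (Fin m → ℚ_[p])) := by
    ext x
    simp only [SetLike.mem_coe, Set.mem_iUnion, Set.mem_image]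
    rw [Submodule.mem_sup]
    constructor
    · rintro ⟨y, hy, z, hz, rfl⟩
      exact ⟨⟨y, hy⟩, z, hz, rfl⟩
    · rintro ⟨⟨y, hy⟩, z, hz, rfl⟩
      exact ⟨y, hy, z, hz, rfl⟩
  rw [this]
  exact isOpen_iUnion fun a => (Homeomorph.addLeft (a : Fin m → ℚ_[p])).isOpen_image.mpr hB

lemma relindex_pk_sandwich (k : ℕ) (X Z : Submodule ℤ_[p] (Fin m → ℚ_[p])) (hZX : Z ≤ X)
    (hXc : IsCompact (X : Set (Fin m → ℚ_[p]))) (hZo : IsOpen (Z : Set (Fin m → ℚ_[p]))) :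
    (Submodule.map (pkSMul p m k) X).toAddSubgroup.relIndex X.toAddSubgroup
      = (Submodule.map (pkSMul p m k) Z).toAddSubgroup.relIndex Z.toAddSubgroup := by
  have hb : ∀ Y W : Submodule ℤ_[p] (Fin m → ℚ_[p]),
      (Submodule.map (pkSMul p m k) Y).toAddSubgroup.relIndex
        (Submodule.map (pkSMul p m k) W).toAddSubgroup
      = Y.toAddSubgroup.relIndex W.toAddSubgroup := by
    intro Y W
    rw [← map_pkEquiv, ← map_pkEquiv]
    exact relindex_map_addEquiv (pkEquiv p m k) _ _
  have hle : ∀ {Y W : Submodule ℤ_[p] (Fin m → ℚ_[p])}, Y ≤ W →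
      Y.toAddSubgroup ≤ W.toAddSubgroup := fun h x hx => h hx
  have a1 : (Submodule.map (pkSMul p m k) Z).toAddSubgroup.relIndex
        (Submodule.map (pkSMul p m k) X).toAddSubgroup
      * (Submodule.map (pkSMul p m k) X).toAddSubgroup.relIndex X.toAddSubgroup
      = (Submodule.map (pkSMul p m k) Z).toAddSubgroup.relIndex X.toAddSubgroup :=
    AddSubgroup.relIndex_mul_relIndex _ _ _
      (hle (Submodule.map_mono hZX)) (hle (map_pk_le p m k X))
  have a2 : (Submodule.map (pkSMul p m k) Z).toAddSubgroup.relIndex Z.toAddSubgroup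
      * Z.toAddSubgroup.relIndex X.toAddSubgroup
      = (Submodule.map (pkSMul p m k) Z).toAddSubgroup.relIndex X.toAddSubgroup :=
    AddSubgroup.relIndex_mul_relIndex _ _ _ (hle (map_pk_le p m k Z)) (hle hZX)
  rw [hb Z X] at a1
  have hne : Z.toAddSubgroup.relIndex X.toAddSubgroup ≠ 0 :=
    relindex_ne_zero _ _ hXc hZo
  have : Z.toAddSubgroup.relIndex X.toAddSubgroup
      * (Submodule.map (pkSMul p m k) X).toAddSubgroup.relIndex X.toAddSubgroup
      = Z.toAddSubgroup.relIndex X.toAddSubgroup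
      * (Submodule.map (pkSMul p m k) Z).toAddSubgroup.relIndex Z.toAddSubgroup := by
    rw [a1, ← a2, mul_comm]
  exact Nat.eq_of_mul_eq_mul_left (Nat.pos_of_ne_zero hne) this

lemma relindex_comap_pk (k : ℕ) (N : Submodule ℤ_[p] (Fin m → ℚ_[p])) :
    N.toAddSubgroup.relIndex (Submodule.comap (pkSMul p m k) N).toAddSubgroup
      = (Submodule.map (pkSMul p m k) N).toAddSubgroup.relIndex N.toAddSubgroup := by
  have := relindex_map_addEquiv (pkEquiv p m k) N.toAddSubgroup
    (Submodule.comap (pkSMul p m k) N).toAddSubgroup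
  rw [map_pkEquiv, map_pkEquiv_comap] at this
  exact this.symm

end sandwich

section specific
variable (p : ℕ) [Fact p.Prime] (m : ℕ)

lemma mem_Kpred_iff (v : Fin (m + 1) → ℚ_[p]) :
    v ∈ Kpred p m ↔ v (Fin.last m) = 0 := by
  simp [Kpred, LinearMap.mem_ker, LinearMap.proj_apply]

lemma genVec_last (ξ : ℤ) (v : Fin (m + 1) → ℚ_[p]) (hv : v ∈ Kpred p m) :
    genVec p m ξ v (Fin.last m) = (p : ℚ_[p]) ^ ξ := by
  rw [genVec, Pi.add_apply, Pi.single_eq_same, (mem_Kpred_iff p m v).mp hv, add_zero]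

lemma genVec_sub (ξ : ℤ) (v w : Fin (m + 1) → ℚ_[p]) :
    genVec p m ξ v - genVec p m ξ w = v - w := by
  simp only [genVec]
  abel

variable (R' : Submodule ℤ_[p] (Fin (m + 1) → ℚ_[p])) (hR'W : R' ≤ Kpred p m)

lemma sup_span_le (ξ : ℤ) (v w : Fin (m + 1) → ℚ_[p]) (h : v - w ∈ R') :
    R' ⊔ Submodule.span ℤ_[p] {genVec p m ξ v} ≤ R' ⊔ Submodule.span ℤ_[p] {genVec p m ξ w} := by
  refine sup_le le_sup_left ?_
  rw [Submodule.span_le, Set.singleton_subset_iff]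
  have : genVec p m ξ v = (v - w) + genVec p m ξ w := by
    rw [← genVec_sub p m ξ v w]; abel
  rw [this]
  exact Submodule.add_mem _ (Submodule.mem_sup_left h)
    (Submodule.mem_sup_right (Submodule.mem_span_singleton_self _))

include hR'W in
lemma sup_span_eq_iff (ξ : ℤ) (v w : Fin (m + 1) → ℚ_[p])
    (hv : v ∈ Kpred p m) (hw : w ∈ Kpred p m) :
    R' ⊔ Submodule.span ℤ_[p] {genVec p m ξ v} = R' ⊔ Submodule.span ℤ_[p] {genVec p m ξ w}
      ↔ v - w ∈ R' := by
  constructor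
  · intro h
    have hg : genVec p m ξ v ∈ R' ⊔ Submodule.span ℤ_[p] {genVec p m ξ w} := by
      rw [← h]
      exact Submodule.mem_sup_right (Submodule.mem_span_singleton_self _)
    obtain ⟨r, hr, z, hz, hsum⟩ := Submodule.mem_sup.mp hg
    obtain ⟨c, rfl⟩ := Submodule.mem_span_singleton.mp hz
    have hlast := congrFun hsum (Fin.last m)
    have hr0 : r (Fin.last m) = 0 := (mem_Kpred_iff p m r).mp (hR'W hr)
    rw [Pi.add_apply, hr0, zero_add, Pi.smul_apply, genVec_last p m ξ w hw,
      genVec_last p m ξ v hv] at hlast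
    have hc1 : c = 1 := by
      have hpne : ((p : ℚ_[p]) ^ ξ) ≠ 0 :=
        zpow_ne_zero _ (Nat.cast_ne_zero.mpr (Fact.out : p.Prime).ne_zero)
      have : (c : ℚ_[p]) = 1 := by
        have := hlast
        rw [Algebra.smul_def, PadicInt.algebraMap_apply] at this
        field_simp at this
        exact this
      exact Subtype.coe_injective (by simpa using this)
    rw [hc1, one_smul] at hsum
    have : v - w = r := by
      rw [← genVec_sub p m ξ v w, ← hsum]; abel
    rw [this]; exact hr
  · intro h
    refine le_antisymm (sup_span_le p m R' ξ v w h) (sup_span_le p m R' ξ w v ?_)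
    simpa using R'.neg_mem h

include hR'W in
lemma padLin_mem_sup_iff (x : Fin m → ℚ_[p]) :
    padLin p m x ∈ R' ⊔ (stdLat p (m + 1) ⊓ Kpred p m)
      ↔ x ∈ (Submodule.comap (padLin p m) R') ⊔ stdLat p m := by
  constructor
  · intro h
    obtain ⟨r, hr, u, hu, hsum⟩ := Submodule.mem_sup.mp h
    refine Submodule.mem_sup.mpr ⟨unpadLin p m r, ?_, unpadLin p m u, ?_, ?_⟩
    · rw [Submodule.mem_comap, pad_unpad p m r (hR'W hr)]
      exact hr
    · rw [mem_stdLat_iff]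
      intro j
      exact (mem_stdLat_iff p _).mp ((Submodule.mem_inf.mp hu).1) _
    · have := congrArg (unpadLin p m) hsum
      rw [map_add] at this
      rw [this, unpad_pad]
  · intro h
    obtain ⟨a, ha, b, hb, hsum⟩ := Submodule.mem_sup.mp h
    refine Submodule.mem_sup.mpr ⟨padLin p m a, ha, padLin p m b,
      Submodule.mem_inf.mpr ⟨(padLin_mem_stdLat p m b).mpr hb, padLin_mem_Kpred p m b⟩, ?_⟩
    rw [← map_add, hsum]

lemma comap_padLin_isOpen (hR'o : IsOpen (Subtype.val ⁻¹'
      (R' : Set (Fin (m + 1) → ℚ_[p])) : Set (Kpred p m))) :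
    IsOpen ((Submodule.comap (padLin p m) R' : Submodule ℤ_[p] (Fin m → ℚ_[p]))
      : Set (Fin m → ℚ_[p])) := by
  have hc : Continuous (fun y : Fin m → ℚ_[p] =>
      (⟨padLin p m y, padLin_mem_Kpred p m y⟩ : ↥(Kpred p m))) :=
    Continuous.subtype_mk (continuous_padLin p m) _
  have : ((Submodule.comap (padLin p m) R' : Submodule ℤ_[p] (Fin m → ℚ_[p]))
        : Set (Fin m → ℚ_[p]))
      = (fun y : Fin m → ℚ_[p] => (⟨padLin p m y, padLin_mem_Kpred p m y⟩ : ↥(Kpred p m)))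
        ⁻¹' (Subtype.val ⁻¹' (R' : Set (Fin (m + 1) → ℚ_[p]))) := rfl
  rw [this]
  exact hR'o.preimage hc

include hR'W in
lemma comap_padLin_isCompact (hR'c : IsCompact (R' : Set (Fin (m + 1) → ℚ_[p]))) :
    IsCompact ((Submodule.comap (padLin p m) R' : Submodule ℤ_[p] (Fin m → ℚ_[p]))
      : Set (Fin m → ℚ_[p])) := by
  have : ((Submodule.comap (padLin p m) R' : Submodule ℤ_[p] (Fin m → ℚ_[p]))
        : Set (Fin m → ℚ_[p]))
      = unpadLin p m '' (R' : Set (Fin (m + 1) → ℚ_[p])) := by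
    ext y
    constructor
    · intro hy
      exact ⟨padLin p m y, hy, unpad_pad p m y⟩
    · rintro ⟨r, hr, rfl⟩
      have : padLin p m (unpadLin p m r) = r := pad_unpad p m r (hR'W hr)
      show padLin p m (unpadLin p m r) ∈ R'
      rw [this]
      exact hr
  rw [this]
  exact hR'c.image (continuous_unpadLin p m)

lemma restrictSet_eq :
    restrictSet p m ((R' ⊓ stdLat p (m + 1) : Submodule ℤ_[p] (Fin (m + 1) → ℚ_[p]))
        : Set (Fin (m + 1) → ℚ_[p]))
      = ((Submodule.comap (padLin p m) R' ⊓ stdLat p m : Submodule ℤ_[p] (Fin m → ℚ_[p]))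
        : Set (Fin m → ℚ_[p])) := by
  ext y
  constructor
  · intro hy
    have h : padLin p m y ∈ R' ⊓ stdLat p (m + 1) := hy
    rw [Submodule.mem_inf] at h
    exact SetLike.mem_coe.mpr (Submodule.mem_inf.mpr ⟨h.1, (padLin_mem_stdLat p m y).mp h.2⟩)
  · intro hy
    have h := Submodule.mem_inf.mp (SetLike.mem_coe.mp hy)
    show padLin p m y ∈ (R' ⊓ stdLat p (m + 1) : Submodule ℤ_[p] (Fin (m + 1) → ℚ_[p]))
    exact Submodule.mem_inf.mpr ⟨h.1, (padLin_mem_stdLat p m y).mpr h.2⟩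

end specific

/-- The number of lattices `R ⊆ ℚ_p^{m+1}` with `R ∩ K^m = R'`, projection valuation `ξ`
and invariant `ν` is `1/vol(R' ∩ O^m)` if `ν = 0` and `p^{νm}(1 - p^{-m})/vol(R' ∩ O^m)`
if `ν > 0`; in particular it does not depend on `ξ`. -/
theorem card_lattices_over (p m : ℕ) [Fact p.Prime]
    (μ' : Measure (Fin m → ℚ_[p])) [μ'.IsAddLeftInvariant]
    (hμ' : μ' ↑(stdLat p m) = 1)
    (R' : Submodule ℤ_[p] (Fin (m + 1) → ℚ_[p])) (hR' : IsLatticeWithin (Kpred p m) R')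
    (ξ : ℤ) (ν : ℕ) :
    (Nat.card {R : Submodule ℤ_[p] (Fin (m + 1) → ℚ_[p]) //
        ∃ v ∈ Kpred p m, R = R' ⊔ Submodule.span ℤ_[p] {genVec p m ξ v} ∧
          IsLeast {k : ℕ | (p : ℚ_[p]) ^ k • v ∈
            R' ⊔ (stdLat p (m + 1) ⊓ Kpred p m)} ν} : ℝ)
      * (μ' (restrictSet p m ((R' ⊓ stdLat p (m + 1) :
          Submodule ℤ_[p] (Fin (m + 1) → ℚ_[p])) : Set (Fin (m + 1) → ℚ_[p])))).toReal
      = if ν = 0 then 1 else (p : ℝ) ^ (ν * m) * (1 - (p : ℝ) ^ (-(m : ℤ))) := by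
  classical
  obtain ⟨hR'W, hR'c, hR'o⟩ := hR'
  set M : Submodule ℤ_[p] (Fin m → ℚ_[p]) := Submodule.comap (padLin p m) R' with hMdef
  set O : Submodule ℤ_[p] (Fin m → ℚ_[p]) := stdLat p m with hOdef
  set N : Submodule ℤ_[p] (Fin m → ℚ_[p]) := M ⊔ O with hNdef
  have hsm : ∀ (k : ℕ) (x : Fin m → ℚ_[p]), pkSMul p m k x = ((p : ℤ_[p]) ^ k) • x :=
    fun k x => rfl
  set Nk : ℕ → Submodule ℤ_[p] (Fin m → ℚ_[p]) :=
    fun k => Submodule.comap (pkSMul p m k) N with hNkdef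
  set Ab : ℕ → Submodule ℤ_[p] ((Fin m → ℚ_[p]) ⧸ M) :=
    fun k => Submodule.map M.mkQ (Nk k) with hAbdef
  -- topology
  have hMo : IsOpen (M : Set (Fin m → ℚ_[p])) := comap_padLin_isOpen p m R' hR'o
  have hMc : IsCompact (M : Set (Fin m → ℚ_[p])) := comap_padLin_isCompact p m R' hR'W hR'c
  have hOo : IsOpen (O : Set (Fin m → ℚ_[p])) := isOpen_stdLat p m
  have hOc : IsCompact (O : Set (Fin m → ℚ_[p])) := isCompact_stdLat p m
  have hNo : IsOpen (N : Set (Fin m → ℚ_[p])) := sup_isOpen p m M O hOo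
  have hNc : IsCompact (N : Set (Fin m → ℚ_[p])) := sup_isCompact p m M O hMc hOc
  have hZo : IsOpen ((M ⊓ O : Submodule ℤ_[p] (Fin m → ℚ_[p])) : Set (Fin m → ℚ_[p])) := by
    have h : ((M ⊓ O : Submodule ℤ_[p] (Fin m → ℚ_[p])) : Set (Fin m → ℚ_[p]))
        = (M : Set (Fin m → ℚ_[p])) ∩ (O : Set (Fin m → ℚ_[p])) := rfl
    rw [h]; exact hMo.inter hOo
  -- inclusions
  have hMN : M ≤ N := le_sup_left
  have hMNk : ∀ k, M ≤ Nk k := fun k x hx => by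
    show pkSMul p m k x ∈ N
    rw [hsm]
    exact hMN (M.smul_mem _ hx)
  have hNNk : ∀ k, N ≤ Nk k := fun k x hx => by
    show pkSMul p m k x ∈ N
    rw [hsm]
    exact N.smul_mem _ hx
  have hNkmono : ∀ {j k : ℕ}, j ≤ k → Nk j ≤ Nk k := by
    intro j k hjk x hx
    have hx' : ((p : ℤ_[p]) ^ j) • x ∈ N := hx
    show pkSMul p m k x ∈ N
    rw [hsm]
    have hp : ((p : ℤ_[p])) ^ k = (p : ℤ_[p]) ^ (k - j) * (p : ℤ_[p]) ^ j := by
      rw [← pow_add, Nat.sub_add_cancel hjk]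
    rw [hp, mul_smul]
    exact N.smul_mem _ hx'
  have hAbmono : ∀ {j k : ℕ}, j ≤ k → Ab j ≤ Ab k :=
    fun h => Submodule.map_mono (hNkmono h)
  have hNk0 : Nk 0 = N := by
    ext x
    show ((p : ℤ_[p]) ^ 0) • x ∈ N ↔ x ∈ N
    rw [pow_zero, one_smul]
  -- transfer
  have htrans : ∀ v ∈ Kpred p m, ∀ k : ℕ,
      ((p : ℚ_[p]) ^ k • v ∈ R' ⊔ (stdLat p (m + 1) ⊓ Kpred p m)
        ↔ M.mkQ (unpadLin p m v) ∈ Ab k) := by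
    intro v hv k
    have h1 : (p : ℚ_[p]) ^ k • v = padLin p m (pkSMul p m k (unpadLin p m v)) := by
      rw [hsm, _root_.map_smul, pad_unpad p m v hv, zsmul_coe]
    rw [h1, padLin_mem_sup_iff p m R' hR'W]
    exact (Submodule.mem_comap.symm.trans (mkQ_mem_map_iff M (Nk k) (hMNk k) _).symm)
  have hsetEq : ∀ v, v ∈ Kpred p m →
      {k : ℕ | (p : ℚ_[p]) ^ k • v ∈ R' ⊔ (stdLat p (m + 1) ⊓ Kpred p m)}
        = {k : ℕ | M.mkQ (unpadLin p m v) ∈ Ab k} :=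
    fun v hv => Set.ext fun k => htrans v hv k
  -- the bijection
  have hbij : Nat.card {R : Submodule ℤ_[p] (Fin (m + 1) → ℚ_[p]) //
        ∃ v ∈ Kpred p m, R = R' ⊔ Submodule.span ℤ_[p] {genVec p m ξ v} ∧
          IsLeast {k : ℕ | (p : ℚ_[p]) ^ k • v ∈
            R' ⊔ (stdLat p (m + 1) ⊓ Kpred p m)} ν}
      = Nat.card {x : (Fin m → ℚ_[p]) ⧸ M // IsLeast {k : ℕ | x ∈ Ab k} ν} := by
    let f : {R : Submodule ℤ_[p] (Fin (m + 1) → ℚ_[p]) //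
        ∃ v ∈ Kpred p m, R = R' ⊔ Submodule.span ℤ_[p] {genVec p m ξ v} ∧
          IsLeast {k : ℕ | (p : ℚ_[p]) ^ k • v ∈
            R' ⊔ (stdLat p (m + 1) ⊓ Kpred p m)} ν}
        → {x : (Fin m → ℚ_[p]) ⧸ M // IsLeast {k : ℕ | x ∈ Ab k} ν} := fun s =>
      ⟨M.mkQ (unpadLin p m s.2.choose), by
        obtain ⟨hvW, hRe, hle⟩ := s.2.choose_spec
        rw [← hsetEq _ hvW]
        exact hle⟩
    apply Nat.card_eq_of_bijective f
    constructor
    · intro s₁ s₂ hf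
      obtain ⟨h1W, h1R, h1L⟩ := s₁.2.choose_spec
      obtain ⟨h2W, h2R, h2L⟩ := s₂.2.choose_spec
      apply Subtype.ext
      rw [h1R, h2R, sup_span_eq_iff p m R' hR'W ξ _ _ h1W h2W]
      have hq : M.mkQ (unpadLin p m s₁.2.choose) = M.mkQ (unpadLin p m s₂.2.choose) :=
        congrArg Subtype.val hf
      have hm : unpadLin p m s₁.2.choose - unpadLin p m s₂.2.choose ∈ M := by
        refine (Submodule.Quotient.eq M).mp ?_
        rw [← Submodule.mkQ_apply, ← Submodule.mkQ_apply, hq]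
      have hthis : padLin p m (unpadLin p m s₁.2.choose - unpadLin p m s₂.2.choose) ∈ R' := hm
      rwa [map_sub, pad_unpad p m _ h1W, pad_unpad p m _ h2W] at hthis
    · rintro ⟨x, hx⟩
      have hmk : M.mkQ (Quotient.out x) = x := by
        rw [Submodule.mkQ_apply]
        exact Quotient.out_eq' x
      have hvW := padLin_mem_Kpred p m (Quotient.out x)
      have hle : IsLeast {k : ℕ | (p : ℚ_[p]) ^ k • (padLin p m (Quotient.out x)) ∈
          R' ⊔ (stdLat p (m + 1) ⊓ Kpred p m)} ν := by
        rw [hsetEq _ hvW, unpad_pad, hmk]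
        exact hx
      set t : {R : Submodule ℤ_[p] (Fin (m + 1) → ℚ_[p]) //
        ∃ v ∈ Kpred p m, R = R' ⊔ Submodule.span ℤ_[p] {genVec p m ξ v} ∧
          IsLeast {k : ℕ | (p : ℚ_[p]) ^ k • v ∈
            R' ⊔ (stdLat p (m + 1) ⊓ Kpred p m)} ν} :=
        ⟨R' ⊔ Submodule.span ℤ_[p] {genVec p m ξ (padLin p m (Quotient.out x))},
          ⟨padLin p m (Quotient.out x), hvW, rfl, hle⟩⟩ with htdef
      refine ⟨t, ?_⟩
      apply Subtype.ext
      obtain ⟨htW, htR, htL⟩ := t.2.choose_spec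
      have ht1 : t.1 = R' ⊔ Submodule.span ℤ_[p]
          {genVec p m ξ (padLin p m (Quotient.out x))} := rfl
      have hvv : t.2.choose - padLin p m (Quotient.out x) ∈ R' :=
        (sup_span_eq_iff p m R' hR'W ξ _ _ htW hvW).mp (htR.symm.trans ht1)
      have hMm : unpadLin p m t.2.choose
          - unpadLin p m (padLin p m (Quotient.out x)) ∈ M := by
        have h5 : padLin p m (unpadLin p m t.2.choose
            - unpadLin p m (padLin p m (Quotient.out x))) ∈ R' := by
          rw [map_sub, pad_unpad p m _ htW, pad_unpad p m _ hvW]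
          exact hvv
        exact h5
      show M.mkQ (unpadLin p m t.2.choose) = x
      have h6 : M.mkQ (unpadLin p m t.2.choose)
          = M.mkQ (unpadLin p m (padLin p m (Quotient.out x))) := by
        rw [Submodule.mkQ_apply, Submodule.mkQ_apply]
        exact (Submodule.Quotient.eq M).mpr hMm
      rw [h6, unpad_pad]
      exact hmk
  -- index computations
  set D : ℕ := (M ⊓ O).toAddSubgroup.relIndex O.toAddSubgroup with hDdef
  have hDne : D ≠ 0 := relindex_ne_zero _ _ hOc hZo
  have hMrelN : M.toAddSubgroup.relIndex N.toAddSubgroup = D := by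
    rw [hNdef, toAddSubgroup_sup, AddSubgroup.relIndex_sup_left, hDdef, toAddSubgroup_inf]
    exact (AddSubgroup.inf_relIndex_right _ _).symm
  have hNrelNk : ∀ k, N.toAddSubgroup.relIndex (Nk k).toAddSubgroup = p ^ (k * m) := by
    intro k
    show N.toAddSubgroup.relIndex (Submodule.comap (pkSMul p m k) N).toAddSubgroup = _
    rw [relindex_comap_pk,
      relindex_pk_sandwich p m k N (M ⊓ O) (le_trans inf_le_left hMN) hNc hZo,
      ← relindex_pk_sandwich p m k O (M ⊓ O) inf_le_right hOc hZo]
    exact relindex_pk_stdLat p m k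
  have hToAddle : ∀ {A B : Submodule ℤ_[p] (Fin m → ℚ_[p])}, A ≤ B →
      A.toAddSubgroup ≤ B.toAddSubgroup := fun h x hx => h hx
  have hcardAb : ∀ k, Nat.card ↥(Ab k) = D * p ^ (k * m) := by
    intro k
    show Nat.card ↥(Submodule.map M.mkQ (Nk k)) = _
    rw [card_map_mkQ, ← AddSubgroup.relIndex_mul_relIndex M.toAddSubgroup N.toAddSubgroup
      (Nk k).toAddSubgroup (hToAddle hMN) (hToAddle (hNNk k)), hMrelN, hNrelNk]
  have hfinAb : ∀ k, Finite ↥(Ab k) := by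
    intro k
    refine (Nat.card_ne_zero.mp ?_).2
    rw [hcardAb]
    exact Nat.mul_ne_zero hDne (pow_ne_zero _ (Fact.out : p.Prime).ne_zero)
  -- measure
  rw [restrictSet_eq p m R']
  have hmeasEq : μ' (O : Set (Fin m → ℚ_[p]))
      = (D : ENNReal) * μ' ((M ⊓ O : Submodule ℤ_[p] (Fin m → ℚ_[p])) : Set (Fin m → ℚ_[p])) :=
    measure_eq_relindex_mul μ' (M ⊓ O).toAddSubgroup O.toAddSubgroup
      (hToAddle inf_le_right) hOc hZo
  have hμfin : μ' ((M ⊓ O : Submodule ℤ_[p] (Fin m → ℚ_[p])) : Set (Fin m → ℚ_[p])) ≠ ⊤ := by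
    refine ne_top_of_le_ne_top (by rw [hμ']; exact ENNReal.one_ne_top) (measure_mono ?_)
    exact fun x hx => (Submodule.mem_inf.mp hx).2
  have hDt : (D : ℝ) * (μ' ((M ⊓ O : Submodule ℤ_[p] (Fin m → ℚ_[p]))
      : Set (Fin m → ℚ_[p]))).toReal = 1 := by
    have h1 : (1 : ENNReal) = (D : ENNReal)
        * μ' ((M ⊓ O : Submodule ℤ_[p] (Fin m → ℚ_[p])) : Set (Fin m → ℚ_[p])) := by
      rw [← hμ', hmeasEq]
    have h2 := congrArg ENNReal.toReal h1
    rw [ENNReal.toReal_mul, ENNReal.toReal_natCast, ENNReal.toReal_one] at h2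
    exact h2.symm
  rw [hbij]
  by_cases hν : ν = 0
  · subst hν
    rw [if_pos rfl]
    have he : {x : (Fin m → ℚ_[p]) ⧸ M // IsLeast {k : ℕ | x ∈ Ab k} 0}
        ≃ {x : (Fin m → ℚ_[p]) ⧸ M // x ∈ Ab 0} :=
      Equiv.subtypeEquivRight fun x =>
        ⟨fun h => h.1, fun h => ⟨h, fun j _ => Nat.zero_le j⟩⟩
    rw [Nat.card_congr he]
    have hc0 : Nat.card {x : (Fin m → ℚ_[p]) ⧸ M // x ∈ Ab 0} = D := by
      have := hcardAb 0
      simpa using this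
    rw [hc0]
    exact hDt
  · rw [if_neg hν]
    obtain ⟨s, rfl⟩ : ∃ s, ν = s + 1 := ⟨ν - 1, by omega⟩
    have hchar : ∀ x : (Fin m → ℚ_[p]) ⧸ M, IsLeast {k : ℕ | x ∈ Ab k} (s + 1)
        ↔ x ∈ ((Ab (s + 1) : Set ((Fin m → ℚ_[p]) ⧸ M)) \ (Ab s : Set ((Fin m → ℚ_[p]) ⧸ M))) := by
      intro x
      constructor
      · intro h
        refine ⟨h.1, fun hmem => ?_⟩
        have := h.2 hmem
        omega
      · rintro ⟨h1, h2⟩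
        refine ⟨h1, fun j hj => ?_⟩
        by_contra hlt
        push_neg at hlt
        exact h2 (hAbmono (by omega : j ≤ s) hj)
    rw [Nat.card_congr (Equiv.subtypeEquivRight hchar)]
    haveI := hfinAb (s + 1)
    haveI := hfinAb s
    have hsub : (Ab s : Set ((Fin m → ℚ_[p]) ⧸ M)) ⊆ (Ab (s + 1) : Set ((Fin m → ℚ_[p]) ⧸ M)) :=
      hAbmono (Nat.le_succ s)
    rw [Nat.card_coe_set_eq, Set.ncard_diff hsub (Set.toFinite _)]
    have hnc : ∀ k, (Ab k : Set ((Fin m → ℚ_[p]) ⧸ M)).ncard = D * p ^ (k * m) := by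
      intro k
      rw [← Nat.card_coe_set_eq]
      exact hcardAb k
    rw [hnc, hnc]
    have hle2 : D * p ^ (s * m) ≤ D * p ^ ((s + 1) * m) :=
      Nat.mul_le_mul_left _ (Nat.pow_le_pow_right (Fact.out : p.Prime).pos
        (Nat.mul_le_mul_right m (Nat.le_succ s)))
    rw [Nat.cast_sub hle2]
    have hD0 : (D : ℝ) ≠ 0 := Nat.cast_ne_zero.mpr hDne
    have hpR : ((p : ℝ)) ≠ 0 := Nat.cast_ne_zero.mpr (Fact.out : p.Prime).ne_zero
    have hpm : ((p : ℝ)) ^ m ≠ 0 := pow_ne_zero _ hpR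
    have hz : (p : ℝ) ^ (-(m : ℤ)) = ((p : ℝ) ^ m)⁻¹ := by
      rw [zpow_neg, zpow_natCast]
    rw [hz]
    have ht : (μ' ((M ⊓ O : Submodule ℤ_[p] (Fin m → ℚ_[p]))
        : Set (Fin m → ℚ_[p]))).toReal = (D : ℝ)⁻¹ :=
      eq_inv_of_mul_eq_one_left (by linarith [hDt] : (μ' ((M ⊓ O : Submodule ℤ_[p] (Fin m → ℚ_[p])) : Set (Fin m → ℚ_[p]))).toReal * (D : ℝ) = 1)
    rw [ht]
    have hpow : ((s + 1) * m) = s * m + m := by ring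
    rw [hpow]
    push_cast
    rw [pow_add]
    field_simp
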